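/- Let P_n be the polycyclic monoid of rank n ≥ 1 and let H be a group generated as a monoid by a finite set Y. If the word problem of H with respect to Y is accepted by a deterministic P_n-automaton over Y, then H is finite. In other words, no deterministic polycyclic monoid automaton accepts the word problem of an infinite finitely generated group. -/

import Mathlib

/-- A monoid `M` has *unique left inverses* if whenever `b * a = 1 = c * a` we have `b = c`. -/
def UniqueLeftInverses (M : Type) [Monoid M] : Prop :=
  ∀ a b c : M, b * a = 1 → c * a = 1 → b = c

/-- The word problem of a group `H`, generated as a monoid by the image of `φ : X → H`,
is the set of words over `X` representing the identity of `H`. -/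
def wordProblem {H : Type} [Group H] {X : Type} (φ : X → H) : Set (List X) :=
  {w | (w.map φ).prod = 1}

/-- A deterministic `M`-automaton over the alphabet `X`: a finite directed graph with
a distinguished initial state, a set of terminal states, and edges labelled by pairs in
`M × X`, such that each state has at most one outgoing edge per letter of `X`. -/
structure DetMAutomaton (M : Type) [Monoid M] (X : Type) where
  State : Type
  [stateFintype : Fintype State]
  init : State
  terminal : Set State
  edge : State → M × X → State → Prop
  det : ∀ ⦃p : State⦄ ⦃x : X⦄ ⦃g h : M⦄ ⦃q r : State⦄,
      edge p (g, x) q → edge p (h, x) r → g = h ∧ q = r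

namespace DetMAutomaton

variable {M : Type} [Monoid M] {X : Type}

/-- `A.Path p m w q` means there is a path from `p` to `q` labelled `(m, w)`: the
`X`-components of its edge labels spell out `w` in order, and the `M`-components
multiply in order to `m`. -/
inductive Path (A : DetMAutomaton M X) : A.State → M → List X → A.State → Prop
  | nil (p : A.State) : Path A p 1 [] p
  | cons {p q r : A.State} {g h : M} {x : X} {w : List X} :
      A.edge p (g, x) q → Path A q h w r → Path A p (g * h) (x :: w) r

/-- The language accepted by a deterministic `M`-automaton: all words `w` such that some
path labelled `(1, w)` leads from the initial state to a terminal state. -/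
def Lang (A : DetMAutomaton M X) : Set (List X) :=
  {w | ∃ q ∈ A.terminal, A.Path A.init 1 w q}

/-- A deterministic `M`-automaton is *deterministic terminal state minimal* (DTSM) if no
deterministic `M`-automaton accepting the same language has strictly fewer terminal states. -/
def DTSM (A : DetMAutomaton M X) : Prop :=
  ∀ B : DetMAutomaton M X, B.Lang = A.Lang → Nat.card A.terminal ≤ Nat.card B.terminal

end DetMAutomaton

/-- Partial maps from `α` to `α`, modelled as functions `α → Option α`. -/
def PartMap (α : Type) := α → Option α

/-- The monoid of partial maps on `α`, multiplication being composition in diagrammatic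
order (so that `f * g` means "apply `f` first, then `g`", matching the convention that
partial maps act on the right of their arguments). -/
instance PartMap.instMonoid {α : Type} : Monoid (PartMap α) where
  one := fun a => some a
  mul f g := fun a => (f a).bind g
  one_mul f := rfl
  mul_one f := funext fun a => by
    show (f a).bind some = f a
    cases f a <;> rfl
  mul_assoc f g h := funext fun a => by
    show ((f a).bind g).bind h = (f a).bind fun b => (g b).bind h
    cases f a <;> rfl

/-- The partial map `X* → X*x`, `w ↦ wx` (a "push"). -/
def pushMap {n : ℕ} (x : Fin n) : PartMap (List (Fin n)) :=
  fun w => some (w ++ [x])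

/-- The partial map `X*x → X*`, `wx ↦ w` (a "pop"); the relational inverse of `pushMap x`. -/
def popMap {n : ℕ} (x : Fin n) : PartMap (List (Fin n)) :=
  fun w => match w.getLast? with
    | some y => if y = x then some w.dropLast else none
    | none => none

/-- The polycyclic monoid of rank `n`: the submonoid of the monoid of partial maps on
`X*` (where `X` is an alphabet of size `n`) generated by the maps `pushMap x` and their
relational inverses `popMap x`, for `x ∈ X`. -/
def polycyclic (n : ℕ) : Submonoid (PartMap (List (Fin n))) :=
  Submonoid.closure (Set.range pushMap ∪ Set.range popMap)

namespace Poly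

variable {n : ℕ}

lemma mul_apply' (f g : PartMap (List (Fin n))) (w : List (Fin n)) :
    (f * g) w = (f w).bind g := rfl

lemma one_apply' (w : List (Fin n)) : (1 : PartMap (List (Fin n))) w = some w := rfl

/-- strip suffix `u`, append `v`. -/
def sf (u v : List (Fin n)) : PartMap (List (Fin n)) :=
  fun w => (w.dropSuffix? u).map (· ++ v)

def zf : PartMap (List (Fin n)) := fun _ => none

lemma dropSuffix?_eq_some' {w u y : List (Fin n)} :
    w.dropSuffix? u = some y ↔ w = y ++ u := by
  rw [List.dropSuffix?_eq_some_iff]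
  constructor
  · rintro ⟨s', rfl, hs⟩
    simp_all
  · rintro rfl
    exact ⟨u, rfl, by simp⟩

lemma sf_eq_some {u v w y : List (Fin n)} :
    sf u v w = some y ↔ ∃ z, w = z ++ u ∧ y = z ++ v := by
  simp only [sf, Option.map_eq_some_iff]
  constructor
  · rintro ⟨z, hz, rfl⟩
    exact ⟨z, dropSuffix?_eq_some'.mp hz, rfl⟩
  · rintro ⟨z, rfl, rfl⟩
    exact ⟨z, dropSuffix?_eq_some'.mpr rfl, rfl⟩

lemma sf_apply_append (u v z : List (Fin n)) : sf u v (z ++ u) = some (z ++ v) :=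
  sf_eq_some.mpr ⟨z, rfl, rfl⟩

lemma sf_nil_apply (v w : List (Fin n)) : sf [] v w = some (w ++ v) := by
  simpa using sf_apply_append [] v w

def NF (m : PartMap (List (Fin n))) : Prop :=
  m = zf ∨ ∃ u v, m = sf u v

lemma suffix_total {l₁ l₂ l₃ : List (Fin n)} (h₁ : l₁ <:+ l₃) (h₂ : l₂ <:+ l₃) :
    l₁ <:+ l₂ ∨ l₂ <:+ l₁ := by
  obtain ⟨a₁, rfl⟩ := h₁
  obtain ⟨a₂, h⟩ := h₂
  rcases List.append_eq_append_iff.mp h with ⟨e, he₁, he₂⟩ | ⟨e, he₁, he₂⟩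
  · exact Or.inl ⟨e, he₂.symm⟩
  · exact Or.inr ⟨e, he₂.symm⟩

lemma zf_mul (m : PartMap (List (Fin n))) : zf * m = zf := rfl

lemma mul_zf (m : PartMap (List (Fin n))) : m * zf = zf := by
  funext w
  show (m w).bind _ = none
  cases m w <;> rfl

lemma sf_mul_sf₁ (u v u' v' c : List (Fin n)) (h : v = c ++ u') :
    sf u v * sf u' v' = sf u (c ++ v') := by
  subst h
  funext w
  rw [mul_apply']
  show ((w.dropSuffix? u).map (· ++ (c ++ u'))).bind (sf u' v') =
    (w.dropSuffix? u).map (· ++ (c ++ v'))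
  cases hw : w.dropSuffix? u with
  | none => rfl
  | some y =>
      show sf u' v' (y ++ (c ++ u')) = ((some y).map (· ++ (c ++ v')))
      rw [← List.append_assoc, sf_apply_append]
      simp [List.append_assoc]

lemma sf_mul_sf₂ (u v u' v' c : List (Fin n)) (h : u' = c ++ v) :
    sf u v * sf u' v' = sf (c ++ u) v' := by
  subst h
  funext w
  rw [mul_apply']
  show ((w.dropSuffix? u).map (· ++ v)).bind (sf (c ++ v) v') =
    (w.dropSuffix? (c ++ u)).map (· ++ v')
  cases hw : w.dropSuffix? (c ++ u) with
  | some y =>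
      have hw' : w = y ++ (c ++ u) := dropSuffix?_eq_some'.mp hw
      have h2 : w.dropSuffix? u = some (y ++ c) := by
        rw [dropSuffix?_eq_some', hw', List.append_assoc]
      rw [h2]
      show sf (c ++ v) v' ((y ++ c) ++ v) = some (y ++ v')
      rw [List.append_assoc, sf_apply_append]
  | none =>
      cases hw2 : w.dropSuffix? u with
      | none => rfl
      | some z =>
          have hz : w = z ++ u := dropSuffix?_eq_some'.mp hw2
          show sf (c ++ v) v' (z ++ v) = none
          cases hzz : sf (c ++ v) v' (z ++ v) with
          | none => rfl
          | some r =>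
              obtain ⟨y, hy, _⟩ := sf_eq_some.mp hzz
              rw [← List.append_assoc] at hy
              have hzy : z = y ++ c := List.append_cancel_right hy
              have h3 : w.dropSuffix? (c ++ u) = some y := by
                rw [dropSuffix?_eq_some', hz, hzy, List.append_assoc]
              rw [h3] at hw; exact absurd hw (by simp)

lemma sf_mul_sf₃ (u v u' v' : List (Fin n)) (h₁ : ¬ u' <:+ v) (h₂ : ¬ v <:+ u') :
    sf u v * sf u' v' = zf := by
  funext w
  rw [mul_apply']
  show ((w.dropSuffix? u).map (· ++ v)).bind (sf u' v') = none
  cases hw : w.dropSuffix? u with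
  | none => rfl
  | some y =>
      show sf u' v' (y ++ v) = none
      cases hz : sf u' v' (y ++ v) with
      | none => rfl
      | some r =>
          obtain ⟨z, hzy, _⟩ := sf_eq_some.mp hz
          have hsuf : u' <:+ y ++ v := ⟨z, hzy.symm⟩
          have hsuf' : v <:+ y ++ v := ⟨y, rfl⟩
          rcases suffix_total hsuf hsuf' with h | h
          · exact absurd h h₁
          · exact absurd h h₂

lemma NF.mul {a b : PartMap (List (Fin n))} (ha : NF a) (hb : NF b) : NF (a * b) := by
  rcases ha with rfl | ⟨u, v, rfl⟩
  · exact Or.inl (zf_mul b)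
  rcases hb with rfl | ⟨u', v', rfl⟩
  · exact Or.inl (mul_zf _)
  by_cases h₁ : u' <:+ v
  · obtain ⟨c, hc⟩ := h₁
    exact Or.inr ⟨u, c ++ v', sf_mul_sf₁ u v u' v' c hc.symm⟩
  by_cases h₂ : v <:+ u'
  · obtain ⟨c, hc⟩ := h₂
    exact Or.inr ⟨c ++ u, v', sf_mul_sf₂ u v u' v' c hc.symm⟩
  · exact Or.inl (sf_mul_sf₃ u v u' v' h₁ h₂)

lemma nf_one : NF (1 : PartMap (List (Fin n))) :=
  Or.inr ⟨[], [], funext fun w => by rw [one_apply', sf_nil_apply, List.append_nil]⟩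

lemma nf_push (x : Fin n) : NF (pushMap x) :=
  Or.inr ⟨[], [x], funext fun w => by rw [sf_nil_apply]; rfl⟩

lemma nf_pop (x : Fin n) : NF (popMap x) := by
  refine Or.inr ⟨[x], [], funext fun w => ?_⟩
  induction w using List.reverseRecOn with
  | nil =>
      show none = sf [x] [] []
      cases h : sf [x] [] ([] : List (Fin n)) with
      | none => rfl
      | some y =>
          obtain ⟨z, hz, _⟩ := sf_eq_some.mp h
          simp at hz
  | append_singleton w a _ =>
      show popMap x (w ++ [a]) = sf [x] [] (w ++ [a])
      by_cases hax : a = x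
      · subst hax
        rw [sf_apply_append]
        simp [popMap]
      · have h1 : popMap x (w ++ [a]) = none := by
          simp [popMap, List.getLast?_append, hax]
        rw [h1]
        cases h : sf [x] [] (w ++ [a]) with
        | none => rfl
        | some y =>
            obtain ⟨z, hz, _⟩ := sf_eq_some.mp h
            obtain ⟨-, h2⟩ := List.append_inj' hz rfl
            simp only [List.cons.injEq] at h2
            exact absurd h2.1 hax

lemma nf_mem {m : PartMap (List (Fin n))} (hm : m ∈ polycyclic n) : NF m := by
  induction hm using Submonoid.closure_induction with
  | mem x hx =>
      rcases hx with ⟨y, rfl⟩ | ⟨y, rfl⟩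
      · exact nf_push y
      · exact nf_pop y
  | one => exact nf_one
  | mul x y hx hy ihx ihy => exact ihx.mul ihy

lemma sf_total_nil {a : PartMap (List (Fin n))} (ha : NF a) (h : a [] ≠ none) :
    ∃ v, a = sf [] v := by
  rcases ha with rfl | ⟨u, v, rfl⟩
  · exact absurd rfl h
  · cases hu : sf u v ([] : List (Fin n)) with
    | none => exact absurd hu h
    | some y =>
        obtain ⟨z, hz, _⟩ := sf_eq_some.mp hu
        obtain ⟨rfl, rfl⟩ := List.append_eq_nil_iff.mp hz.symm
        exact ⟨v, rfl⟩

/-- If `a * t = 1` with `a, t` in normal form, then `a` is a pure push `sf [] v` and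
`t` is the corresponding pure pop `sf v []`. -/
lemma push_pop_of_mul_eq_one {a t : PartMap (List (Fin n))} (ha : NF a) (ht : NF t)
    (h : a * t = 1) : ∃ v, a = sf [] v ∧ t = sf v [] := by
  have hpt : ∀ w, (a w).bind t = some w := fun w => by
    rw [← mul_apply', h, one_apply']
  obtain ⟨v, rfl⟩ : ∃ v, a = sf [] v := by
    refine sf_total_nil ha fun h0 => ?_
    have := hpt []
    rw [h0] at this
    cases this
  refine ⟨v, rfl, ?_⟩
  have htv : t v = some [] := by
    have := hpt []
    rwa [sf_nil_apply, List.nil_append] at this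
  rcases ht with rfl | ⟨u', v', rfl⟩
  · cases htv
  · obtain ⟨z, hz, hz2⟩ := sf_eq_some.mp htv
    obtain ⟨rfl, rfl⟩ := List.append_eq_nil_iff.mp hz2.symm
    rw [List.nil_append] at hz
    rw [hz]

/-- Key algebraic step: if `a * t = 1` and `(b * t) * s = 1` in the polycyclic monoid,
then `a = sf [] v`, `b = sf [] v'` with `v` a suffix of `v'`. -/
lemma key_alg {a b t s : PartMap (List (Fin n))} (hna : NF a) (hnb : NF b) (hnt : NF t)
    (hnts : NF (t * s)) (h1 : a * t = 1) (h2 : b * t * s = 1) :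
    ∃ v v' d, a = sf [] v ∧ b = sf [] v' ∧ v' = d ++ v := by
  obtain ⟨v, hav, htv⟩ := push_pop_of_mul_eq_one hna hnt h1
  have h2' : b * (t * s) = 1 := by rw [← mul_assoc]; exact h2
  obtain ⟨v', hbv, -⟩ := push_pop_of_mul_eq_one hnb hnts h2'
  refine ⟨v, v', ?_⟩
  have hb0 : ∀ w, ((b w).bind t).bind s = some w := fun w => by
    have : (b * t * s) w = (1 : PartMap (List (Fin n))) w := by rw [h2]
    rwa [mul_apply', mul_apply', one_apply'] at this
  have := hb0 []
  rw [hbv, sf_nil_apply, List.nil_append, htv] at this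
  cases hvv : sf v ([] : List (Fin n)) v' with
  | none =>
      rw [show (some v').bind (sf v []) = sf v [] v' from rfl, hvv] at this
      cases this
  | some y =>
      obtain ⟨d, hd, -⟩ := sf_eq_some.mp hvv
      exact ⟨d, hav, hbv, hd⟩

lemma sf_nil_inj {v v' : List (Fin n)} (h : sf [] v = (sf [] v' : PartMap (List (Fin n)))) :
    v = v' := by
  have h1 : sf [] v ([] : List (Fin n)) = sf [] v' ([] : List (Fin n)) := by rw [h]
  rw [sf_nil_apply, sf_nil_apply, List.nil_append, List.nil_append] at h1
  injection h1

end Poly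

namespace DetMAutomaton
variable {M : Type} [Monoid M] {X : Type} {A : DetMAutomaton M X}


lemma path_det {p : A.State} {m m' : M} {w : List X} {q q' : A.State}
    (h1 : A.Path p m w q) (h2 : A.Path p m' w q') : m = m' ∧ q = q' := by
  induction h1 generalizing m' q' with
  | nil p => cases h2; exact ⟨rfl, rfl⟩
  | cons e h ih =>
      cases h2 with
      | cons e' h' =>
          obtain ⟨rfl, rfl⟩ := A.det e e'
          obtain ⟨rfl, rfl⟩ := ih h'
          exact ⟨rfl, rfl⟩

lemma path_append {p : A.State} {m m' : M} {w w' : List X} {q r : A.State}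
    (h1 : A.Path p m w q) (h2 : A.Path q m' w' r) : A.Path p (m * m') (w ++ w') r := by
  induction h1 with
  | nil => rw [one_mul]; exact h2
  | cons e h ih => rw [mul_assoc]; exact Path.cons e (ih h2)

lemma path_split {p : A.State} {m : M} {w w' : List X} {r : A.State}
    (h : A.Path p m (w ++ w') r) :
    ∃ q m₁ m₂, m = m₁ * m₂ ∧ A.Path p m₁ w q ∧ A.Path q m₂ w' r := by
  induction w generalizing p m with
  | nil => exact ⟨p, 1, m, (one_mul m).symm, Path.nil p, h⟩
  | cons x w ih =>
      cases h with
      | cons e h' =>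
          obtain ⟨q, m₁, m₂, rfl, hp1, hp2⟩ := ih h'
          exact ⟨q, _ * m₁, m₂, (mul_assoc _ _ _).symm, Path.cons e hp1, hp2⟩

end DetMAutomaton

/-- No deterministic polycyclic monoid automaton accepts the word problem of an infinite
finitely generated group: if the word problem of `H` (generated as a monoid by the finite
set `Y`) is accepted by a deterministic `P_n`-automaton, then `H` is finite. -/
theorem finite_of_wordProblem_det_polycyclic_automaton {n : ℕ} (hn : 1 ≤ n)
    {H : Type} [Group H] {Y : Type} [Fintype Y] (φ : Y → H)
    (hgen : ∀ h : H, ∃ w : List Y, (w.map φ).prod = h)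
    (A : DetMAutomaton ↥(polycyclic n) Y) (hacc : A.Lang = wordProblem φ) :
    Finite H := by

  classical
  haveI := A.stateFintype
  -- every run can be extended to an accepting run
  have ext : ∀ (w : List Y) (m : ↥(polycyclic n)) (q : A.State), A.Path A.init m w q →
      ∃ (u : List Y) (t : ↥(polycyclic n)) (qT : A.State),
        (u.map φ).prod = ((w.map φ).prod)⁻¹ ∧ qT ∈ A.terminal ∧ m * t = 1 ∧
          A.Path q t u qT := by
    intro w m q hpath
    obtain ⟨u, hu⟩ := hgen ((w.map φ).prod)⁻¹
    have hmem : (w ++ u) ∈ A.Lang := by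
      rw [hacc]
      show ((w ++ u).map φ).prod = 1
      rw [List.map_append, List.prod_append, hu, mul_inv_cancel]
    obtain ⟨qT, hT, hp⟩ := hmem
    obtain ⟨q₁, m₁, m₂, hmul, hp1, hp2⟩ := DetMAutomaton.path_split hp
    obtain ⟨hm, hq⟩ := DetMAutomaton.path_det hp1 hpath
    subst hm; subst hq
    exact ⟨u, m₂, qT, hu, hT, hmul.symm, hp2⟩
  -- every word has a run
  have runAll : ∀ w : List Y, ∃ m q, A.Path A.init m w q := by
    intro w
    obtain ⟨u, hu⟩ := hgen ((w.map φ).prod)⁻¹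
    have hmem : (w ++ u) ∈ A.Lang := by
      rw [hacc]
      show ((w ++ u).map φ).prod = 1
      rw [List.map_append, List.prod_append, hu, mul_inv_cancel]
    obtain ⟨qT, hT, hp⟩ := hmem
    obtain ⟨q₁, m₁, m₂, hmul, hp1, hp2⟩ := DetMAutomaton.path_split hp
    exact ⟨m₁, q₁, hp1⟩
  choose wd hwd using hgen
  choose reg st hrun using fun h : H => runAll (wd h)
  -- key suffix relation between registers of words ending at the same state
  have key : ∀ h h' : H, st h = st h' →
      ∃ v v' d : List (Fin n), ((reg h : PartMap (List (Fin n))) = Poly.sf [] v) ∧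
        ((reg h' : PartMap (List (Fin n))) = Poly.sf [] v') ∧ v' = d ++ v := by
    intro h h' hst
    obtain ⟨u, t, qT, hu, hT, hmt, hpt⟩ := ext (wd h) (reg h) (st h) (hrun h)
    have hp2 : A.Path A.init (reg h' * t) (wd h' ++ u) qT :=
      DetMAutomaton.path_append (hrun h') (hst ▸ hpt)
    obtain ⟨u₂, t₂, qT₂, hu₂, hT₂, hmt₂, hpt₂⟩ := ext (wd h' ++ u) _ _ hp2
    have hna := Poly.nf_mem (reg h).2
    have hnb := Poly.nf_mem (reg h').2
    have hnt := Poly.nf_mem t.2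
    have hnts := Poly.nf_mem (t * t₂).2
    rw [Submonoid.coe_mul] at hnts
    have h1 : (reg h : PartMap (List (Fin n))) * t = 1 := by
      rw [← Submonoid.coe_mul, hmt, Submonoid.coe_one]
    have h2 : (reg h' : PartMap (List (Fin n))) * t * t₂ = 1 := by
      rw [← Submonoid.coe_mul, ← Submonoid.coe_mul, hmt₂, Submonoid.coe_one]
    exact Poly.key_alg hna hnb hnt hnts h1 h2
  -- registers of words ending at the same state agree
  have regEq : ∀ h h' : H, st h = st h' → reg h = reg h' := by
    intro h h' hst
    obtain ⟨v1, v1', d, ha1, hb1, hd1⟩ := key h h' hst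
    obtain ⟨v2', v2, d', hb2, ha2, hd2⟩ := key h' h hst.symm
    have e1 : v1 = v2 := Poly.sf_nil_inj (ha1.symm.trans ha2)
    have e2 : v1' = v2' := Poly.sf_nil_inj (hb1.symm.trans hb2)
    have e3 : v1 = (d' ++ d) ++ v1 := by
      conv_lhs => rw [e1, hd2, ← e2, hd1]
      rw [List.append_assoc]
    have e4 : d' ++ d = ([] : List (Fin n)) := by
      have := congrArg List.length e3
      rw [List.length_append] at this
      have hlen : (d' ++ d).length = 0 := by omega
      exact List.length_eq_zero_iff.mp hlen
    have e5 : d = ([] : List (Fin n)) := (List.append_eq_nil_iff.mp e4).2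
    have : (reg h : PartMap (List (Fin n))) = (reg h' : PartMap (List (Fin n))) := by
      rw [ha1, hb1, hd1, e5, List.nil_append]
    exact Subtype.ext this
  -- the state map is injective
  have stInj : Function.Injective st := by
    intro h h' hst
    obtain ⟨u, t, qT, hu, hT, hmt, hpt⟩ := ext (wd h) (reg h) (st h) (hrun h)
    have hp2 : A.Path A.init (reg h' * t) (wd h' ++ u) qT :=
      DetMAutomaton.path_append (hrun h') (hst ▸ hpt)
    have hone : reg h' * t = 1 := by rw [regEq h' h hst.symm]; exact hmt
    have hmem : (wd h' ++ u) ∈ A.Lang := ⟨qT, hT, hone ▸ hp2⟩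
    rw [hacc] at hmem
    have hprod : ((wd h' ++ u).map φ).prod = 1 := hmem
    rw [List.map_append, List.prod_append, hwd h', hu, hwd h] at hprod
    exact (mul_inv_eq_one.mp hprod).symm
  exact Finite.of_injective st stInj
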